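/- Let N₁, N₂, M₁, M₂ be nonempty finite types, set N := N₁ × N₂, and for a matrix A ∈ Matrix(N×(M₁×M₂), N×(M₁×M₂), ℂ) define the fully depolarising channel on the N factor by D[A] := (1/|N|)·I_N ⊗ Tr_N A. Then ‖ Tr_{N₁×M₁}( D[A] ) ‖_F = (1/√|N₂|) · ‖ Tr_N( Tr_{M₁} A ) ‖_F, where Tr_{N₁×M₁}, Tr_N, Tr_{M₁} denote partial traces over the indicated tensor factors and ‖·‖_F is the Frobenius norm. In particular ‖ Tr_{N₁×M₁}( D[A] ) ‖_F ≤ (1/√|N₂|) · ‖ Tr_N( Tr_{M₁} A ) ‖_F. -/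

import Mathlib

open Finset Matrix
open scoped Kronecker

/-- The Frobenius norm `‖M‖_F = √(Σ_{i,j} |M_{ij}|²)` of a complex matrix. -/
noncomputable def frobeniusNorm {n m : Type*} [Fintype n] [Fintype m]
    (M : Matrix n m ℂ) : ℝ :=
  Real.sqrt (∑ i, ∑ j, ‖M i j‖ ^ 2)

/-- Partial trace over the first tensor factor:
`(Tr_N M)(m, m') = Σ_n M((n,m), (n,m'))`. -/
noncomputable def ptraceN {N M : Type*} [Fintype N]
    (A : Matrix (N × M) (N × M) ℂ) : Matrix M M ℂ :=
  Matrix.of fun m m' => ∑ n, A (n, m) (n, m')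

/-- Partial trace over the `N₁` and `M₁` tensor factors of a matrix indexed by
`(N₁ × N₂) × (M₁ × M₂)`. -/
noncomputable def ptraceN1M1 {N₁ N₂ M₁ M₂ : Type*} [Fintype N₁] [Fintype M₁]
    (A : Matrix ((N₁ × N₂) × (M₁ × M₂)) ((N₁ × N₂) × (M₁ × M₂)) ℂ) :
    Matrix (N₂ × M₂) (N₂ × M₂) ℂ :=
  Matrix.of fun p q => ∑ a : N₁, ∑ c : M₁,
    A ((a, p.1), (c, p.2)) ((a, q.1), (c, q.2))

/-- Partial trace over the `M₁` tensor factor of a matrix indexed by `N × (M₁ × M₂)`. -/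
noncomputable def ptraceM1 {N M₁ M₂ : Type*} [Fintype M₁]
    (A : Matrix (N × (M₁ × M₂)) (N × (M₁ × M₂)) ℂ) :
    Matrix (N × M₂) (N × M₂) ℂ :=
  Matrix.of fun p q => ∑ c : M₁, A (p.1, (c, p.2)) (q.1, (c, q.2))

/-- **Frobenius norm of a partially traced fully depolarised state.**
For the fully depolarising channel `D[A] = (1/|N|)·1_N ⊗ Tr_N A` on the factor
`N = N₁ × N₂` of `N × (M₁ × M₂)`, the Frobenius norm of the partial trace of `D[A]`
over `N₁ × M₁` equals `(1/√|N₂|)·‖Tr_N (Tr_{M₁} A)‖_F`; in particular it is bounded by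
that quantity. -/
theorem depolarised_ptrace_frobenius
    {N₁ N₂ M₁ M₂ : Type*}
    [Fintype N₁] [Fintype N₂] [Fintype M₁] [Fintype M₂]
    [DecidableEq N₁] [DecidableEq N₂]
    [Nonempty N₁] [Nonempty N₂] [Nonempty M₁] [Nonempty M₂]
    (A : Matrix ((N₁ × N₂) × (M₁ × M₂)) ((N₁ × N₂) × (M₁ × M₂)) ℂ)
    (DA : Matrix ((N₁ × N₂) × (M₁ × M₂)) ((N₁ × N₂) × (M₁ × M₂)) ℂ)
    (hDA : DA = ((Fintype.card (N₁ × N₂) : ℂ))⁻¹ •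
      ((1 : Matrix (N₁ × N₂) (N₁ × N₂) ℂ) ⊗ₖ ptraceN A)) :
    frobeniusNorm (ptraceN1M1 DA) =
      (1 / Real.sqrt (Fintype.card N₂)) * frobeniusNorm (ptraceN (ptraceM1 A)) ∧
    frobeniusNorm (ptraceN1M1 DA) ≤
      (1 / Real.sqrt (Fintype.card N₂)) * frobeniusNorm (ptraceN (ptraceM1 A)) := by

  classical
  have hN₂ : (0:ℝ) < (Fintype.card N₂ : ℝ) := by
    exact_mod_cast Fintype.card_pos
  set S := ptraceN (ptraceM1 A) with hS
  have key : ∀ p q : N₂ × M₂, ptraceN1M1 DA p q =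
      if p.1 = q.1 then ((Fintype.card N₂ : ℂ))⁻¹ * S p.2 q.2 else 0 := by
    intro p q
    subst hDA
    simp only [ptraceN1M1, Matrix.of_apply, Matrix.smul_apply, Matrix.kroneckerMap_apply,
      Matrix.one_apply, smul_eq_mul, Prod.mk.injEq, true_and]
    by_cases h : p.1 = q.1
    · simp only [h, if_true, one_mul]
      have hswap : S p.2 q.2 = ∑ c : M₁, ∑ n : N₁ × N₂,
          A (n, (c, p.2)) (n, (c, q.2)) := by
        simp only [hS, ptraceN, ptraceM1, Matrix.of_apply]
        exact Finset.sum_comm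
      rw [hswap]
      have hcard : (Fintype.card (N₁ × N₂) : ℂ) =
          (Fintype.card N₁ : ℂ) * (Fintype.card N₂ : ℂ) := by
        rw [Fintype.card_prod]; push_cast; ring
      have h1 : ((Fintype.card N₁ : ℂ)) ≠ 0 := by
        exact_mod_cast Fintype.card_ne_zero
      have h2 : ((Fintype.card N₂ : ℂ)) ≠ 0 := by
        exact_mod_cast Fintype.card_ne_zero
      rw [Finset.sum_comm]
      rw [Finset.mul_sum]
      refine Finset.sum_congr rfl fun c _ => ?_
      simp only [ptraceN, Matrix.of_apply, Finset.sum_const, Finset.card_univ,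
        nsmul_eq_mul, hcard]
      field_simp
    · simp [h]
  have habs : ∀ p q : N₂ × M₂, ‖ptraceN1M1 DA p q‖ ^ 2 =
      if p.1 = q.1 then ((Fintype.card N₂ : ℝ))⁻¹ ^ 2 * ‖S p.2 q.2‖ ^ 2
      else 0 := by
    intro p q
    rw [key p q]
    split
    · rw [norm_mul, mul_pow, norm_inv]
      norm_num [Complex.norm_natCast]
    · simp
  have hsum : (∑ i : N₂ × M₂, ∑ j : N₂ × M₂, ‖ptraceN1M1 DA i j‖ ^ 2)
      = (Fintype.card N₂ : ℝ)⁻¹ *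
        ∑ i : M₂, ∑ j : M₂, ‖S i j‖ ^ 2 := by
    simp only [habs]
    rw [Fintype.sum_prod_type]
    have inner : ∀ p₁ : N₂, ∀ p₂ : M₂,
        (∑ q : N₂ × M₂, if p₁ = q.1 then
          ((Fintype.card N₂ : ℝ))⁻¹ ^ 2 * ‖S p₂ q.2‖ ^ 2 else 0)
        = ((Fintype.card N₂ : ℝ))⁻¹ ^ 2 * ∑ q₂ : M₂, ‖S p₂ q₂‖ ^ 2 := by
      intro p₁ p₂
      rw [Fintype.sum_prod_type]
      have h1 : ∀ x : N₂, (∑ y : M₂, if p₁ = x then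
          ((Fintype.card N₂ : ℝ))⁻¹ ^ 2 * ‖S p₂ y‖ ^ 2 else 0)
          = if p₁ = x then ∑ y : M₂,
            ((Fintype.card N₂ : ℝ))⁻¹ ^ 2 * ‖S p₂ y‖ ^ 2 else 0 := by
        intro x; split <;> simp
      simp only [h1]
      rw [Finset.sum_ite_eq]
      simp [Finset.mul_sum]
    simp only [inner]
    rw [Finset.sum_const, Finset.card_univ, nsmul_eq_mul]
    have hcc : (Fintype.card N₂ : ℝ) * ((Fintype.card N₂ : ℝ))⁻¹ ^ 2
        = (Fintype.card N₂ : ℝ)⁻¹ := by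
      field_simp
    rw [← Finset.mul_sum, ← mul_assoc, hcc]
  have main : frobeniusNorm (ptraceN1M1 DA) =
      (1 / Real.sqrt (Fintype.card N₂)) * frobeniusNorm S := by
    unfold frobeniusNorm
    rw [hsum, Real.sqrt_mul (by positivity), Real.sqrt_inv, one_div]
  exact ⟨main, le_of_eq main⟩
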